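/- Let 0 < p < ∞ and 0 < q < r ≤ ∞. The Bernstein numbers of the embedding id : ℓ_{p,q} → ℓ_{p,r} are bounded below: there is α > 0 such that b_n(id) ≥ α for all n ∈ ℕ. Consequently, the embedding is not finitely strictly singular. -/

import Mathlib

open Filter MeasureTheory Set
open scoped ENNReal NNReal Topology

/-- Non-increasing rearrangement of a sequence (0-indexed: `rearr u j` is the
`(j+1)`-th largest value of `|u|`). -/
noncomputable def rearr (u : ℕ → ℝ) (j : ℕ) : ℝ :=
  sInf {t : ℝ | 0 ≤ t ∧ Set.encard {i : ℕ | t < |u i|} ≤ (j : ℕ∞)}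

/-- Lorentz sequence quasi-norm `‖u‖_{p,q}` for `q < ∞`. -/
noncomputable def lorentzNorm (p q : ℝ) (u : ℕ → ℝ) : ℝ≥0∞ :=
  (∑' j : ℕ, ENNReal.ofReal (((j : ℝ) + 1) ^ (q / p - 1) * rearr u j ^ q)) ^ (1 / q)

/-- Lorentz sequence quasi-norm `‖u‖_{p,∞}`. -/
noncomputable def lorentzNormInf (p : ℝ) (u : ℕ → ℝ) : ℝ≥0∞ :=
  ⨆ j : ℕ, ENNReal.ofReal (((j : ℝ) + 1) ^ (1 / p) * rearr u j)

/-- Lorentz sequence quasi-norm with extended second index. -/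
noncomputable def lorentzNormE (p : ℝ) (q : ℝ≥0∞) (u : ℕ → ℝ) : ℝ≥0∞ :=
  if q = ⊤ then lorentzNormInf p u else lorentzNorm p q.toReal u


namespace LorentzAux

open Finset

/-- ±1 value of a boolean. -/
def sgn (b : Bool) : ℝ := if b then 1 else -1

lemma sgn_abs (b : Bool) : |sgn b| = 1 := by cases b <;> simp [sgn]

/-- Khintchine constants: odd double factorials. -/
def khc : ℕ → ℕ
  | 0 => 1
  | s+1 => (2*s+1) * khc s

lemma khc_pos (s : ℕ) : 0 < khc s := by
  induction s with
  | zero => simp [khc]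
  | succ n ih => exact Nat.mul_pos (by omega) ih

lemma khc_fact (s : ℕ) : khc s * (2^s * s.factorial) = (2*s).factorial := by
  induction s with
  | zero => simp [khc]
  | succ n ih =>
    have h1 : 2*(n+1) = 2*n+1+1 := by ring
    rw [h1, Nat.factorial_succ, Nat.factorial_succ, show khc (n+1) = (2*n+1) * khc n from rfl]
    calc (2*n+1) * khc n * (2^(n+1) * (n+1).factorial)
        = (2*n+1+1)*((2*n+1) * (khc n * (2^n * n.factorial))) := by
          rw [Nat.factorial_succ]; ring
      _ = (2*n+1+1)*((2*n+1)*(2*n).factorial) := by rw [ih]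

lemma two_pow_mul_fact_le (m : ℕ) : 2^m * m.factorial ≤ (2*m).factorial := by
  induction m with
  | zero => simp
  | succ n ih =>
    have h1 : 2*(n+1) = 2*n+1+1 := by ring
    rw [h1, Nat.factorial_succ, Nat.factorial_succ, Nat.factorial_succ]
    calc 2^(n+1) * ((n+1) * n.factorial) = (2*n+1+1) * (2^n * n.factorial) := by ring
      _ ≤ (2*n+1+1) * ((2*n+1) * (2*n).factorial) := by
          refine Nat.mul_le_mul_left _ ?_
          calc 2^n * n.factorial ≤ (2*n).factorial := ih
            _ ≤ (2*n+1) * (2*n).factorial := Nat.le_mul_of_pos_left _ (by omega)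

lemma khc_choose_le (s i : ℕ) (h : i ≤ s) :
    (2*s).choose (2*i) * khc i ≤ khc s * s.choose i := by
  have h5 : 2*s - 2*i = 2*(s-i) := by omega
  have e1 : khc i * (2^i * i.factorial) = (2*i).factorial := khc_fact i
  have e2 : (2*s).choose (2*i) * (2*i).factorial * (2*(s-i)).factorial = (2*s).factorial := by
    have := Nat.choose_mul_factorial_mul_factorial (show 2*i ≤ 2*s by omega)
    rwa [h5] at this
  have e3 : s.choose i * i.factorial * (s-i).factorial = s.factorial :=
    Nat.choose_mul_factorial_mul_factorial h
  have e4 : khc s * (2^s * s.factorial) = (2*s).factorial := khc_fact s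
  have epow : 2^i * 2^(s-i) = 2^s := by rw [← pow_add]; congr 1; omega
  set P := (2^i * i.factorial) * ((2*(s-i)).factorial * (2^(s-i) * (s-i).factorial)) with hP
  have hPpos : 0 < P := by positivity
  refine Nat.le_of_mul_le_mul_right ?_ hPpos
  have lhs_eq : (2*s).choose (2*i) * khc i * P
      = (2*s).factorial * (2^(s-i) * (s-i).factorial) := by
    calc (2*s).choose (2*i) * khc i * P
        = ((2*s).choose (2*i) * (khc i * (2^i * i.factorial)) * (2*(s-i)).factorial)
            * (2^(s-i) * (s-i).factorial) := by rw [hP]; ring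
      _ = ((2*s).choose (2*i) * (2*i).factorial * (2*(s-i)).factorial)
            * (2^(s-i) * (s-i).factorial) := by rw [e1]
      _ = (2*s).factorial * (2^(s-i) * (s-i).factorial) := by rw [e2]
  have rhs_eq : khc s * s.choose i * P = (2*s).factorial * (2*(s-i)).factorial := by
    calc khc s * s.choose i * P
        = (khc s * ((2^i * 2^(s-i)) * (s.choose i * i.factorial * (s-i).factorial)))
            * (2*(s-i)).factorial := by rw [hP]; ring
      _ = (khc s * (2^s * s.factorial)) * (2*(s-i)).factorial := by rw [epow, e3]
      _ = (2*s).factorial * (2*(s-i)).factorial := by rw [e4]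
  rw [lhs_eq, rhs_eq]
  exact Nat.mul_le_mul_left _ (two_pow_mul_fact_le (s-i))


@[simp] lemma sgn_true : sgn true = 1 := rfl
@[simp] lemma sgn_false : sgn false = -1 := rfl

lemma sum_even_reindex (g : ℕ → ℝ) (m : ℕ) :
    ∑ j ∈ range (2*m+1), (if Even j then g j else 0) = ∑ i ∈ range (m+1), g (2*i) := by
  induction m with
  | zero => simp
  | succ n ih =>
    rw [show 2*(n+1)+1 = (2*n+1)+1+1 by ring, Finset.sum_range_succ, Finset.sum_range_succ, ih,
      Finset.sum_range_succ, Finset.sum_range_succ]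
    rw [if_neg (by simp [Nat.even_add_one, parity_simps]), if_pos (by exact ⟨n+1, by ring⟩)]
    rw [show 2*(n+1) = 2*n+2 by ring, Finset.sum_range_succ]
    ring

lemma even_binom (x b : ℝ) (s : ℕ) :
    (x+b)^(2*s) + (x-b)^(2*s)
      = 2 * ∑ i ∈ range (s+1), ((2*s).choose (2*i) : ℝ) * x^(2*i) * (b^2)^(s-i) := by
  rw [add_pow, sub_eq_add_neg, add_pow, ← Finset.sum_add_distrib]
  have key : ∀ j ∈ range (2*s+1),
      x^j * b^(2*s-j) * ((2*s).choose j : ℝ) + x^j * (-b)^(2*s-j) * ((2*s).choose j : ℝ)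
      = if Even j then 2 * (x^j * b^(2*s-j) * ((2*s).choose j : ℝ)) else 0 := by
    intro j hj
    have hj' : j ≤ 2*s := by simpa [Nat.lt_succ_iff] using Finset.mem_range.1 hj
    by_cases hje : Even j
    · have h2 : Even (2*s - j) := by
        rcases hje with ⟨c, hc⟩
        exact ⟨s - c, by omega⟩
      rw [if_pos hje, h2.neg_pow]; ring
    · have h2 : Odd (2*s - j) := by
        rcases Nat.odd_iff.2 (Nat.not_even_iff.1 hje) with ⟨c, hc⟩
        exact ⟨s - c - 1, by omega⟩
      rw [if_neg hje, h2.neg_pow]; ring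
  rw [Finset.sum_congr rfl key, sum_even_reindex (fun j => 2 * (x^j * b^(2*s-j) * ((2*s).choose j : ℝ))) s,
    Finset.mul_sum]
  refine Finset.sum_congr rfl fun i hi => ?_
  have hi' : i ≤ s := by simpa [Nat.lt_succ_iff] using Finset.mem_range.1 hi
  have h22 : 2*s - 2*i = 2*(s-i) := by omega
  rw [h22, pow_mul]
  ring

def rad (n : ℕ) (a : Fin n → ℝ) (ε : Fin n → Bool) : ℝ := ∑ k, a k * sgn (ε k)

lemma rad_cons (n : ℕ) (a : Fin (n+1) → ℝ) (b : Bool) (ε : Fin n → Bool) :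
    rad (n+1) a (Fin.cons b ε) = a 0 * sgn b + rad n (fun k => a k.succ) ε := by
  rw [rad, Fin.sum_univ_succ]
  simp [rad]

lemma cube_sum_succ (n : ℕ) (F : (Fin (n+1) → Bool) → ℝ) :
    ∑ ε : Fin (n+1) → Bool, F ε
      = ∑ ε : Fin n → Bool, (F (Fin.cons true ε) + F (Fin.cons false ε)) := by
  rw [← Equiv.sum_comp (Fin.consEquiv (fun _ => Bool)) F, Fintype.sum_prod_type,
    Fintype.sum_bool]
  rw [← Finset.sum_add_distrib]
  rfl

lemma card_cube (n : ℕ) : Fintype.card (Fin n → Bool) = 2^n := by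
  simp [Fintype.card_fun]

lemma rad_sq (n : ℕ) (a : Fin n → ℝ) :
    ∑ ε : Fin n → Bool, (rad n a ε)^2 = 2^n * ∑ k, (a k)^2 := by
  induction n with
  | zero => simp [rad]
  | succ n ih =>
    rw [cube_sum_succ]
    have key : ∀ ε : Fin n → Bool,
        (rad (n+1) a (Fin.cons true ε))^2 + (rad (n+1) a (Fin.cons false ε))^2
        = 2 * (rad n (fun k => a k.succ) ε)^2 + 2 * (a 0)^2 := by
      intro ε
      rw [rad_cons, rad_cons, sgn_true, sgn_false]
      ring
    rw [Finset.sum_congr rfl (fun ε _ => key ε), Finset.sum_add_distrib, ← Finset.mul_sum, ih,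
      Finset.sum_const, Fin.sum_univ_succ]
    simp only [Finset.card_univ, card_cube]
    push_cast
    ring

lemma khintchine (n : ℕ) (a : Fin n → ℝ) (s : ℕ) :
    ∑ ε : Fin n → Bool, (rad n a ε)^(2*s)
      ≤ (khc s : ℝ) * 2^n * (∑ k, (a k)^2)^s := by
  induction n generalizing s with
  | zero =>
    have hz : ∀ ε : Fin 0 → Bool, rad 0 a ε = 0 := fun ε => by simp [rad]
    cases s with
    | zero => simp [hz, khc]
    | succ m =>
      have h1 : 2*(m+1) ≠ 0 := by omega
      simp [hz, zero_pow h1]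
  | succ n ih =>
    have hterm : ∀ ε : Fin n → Bool,
        (rad (n+1) a (Fin.cons true ε))^(2*s) + (rad (n+1) a (Fin.cons false ε))^(2*s)
        = 2 * ∑ i ∈ range (s+1), ((2*s).choose (2*i):ℝ) *
            (rad n (fun k => a k.succ) ε)^(2*i) * ((a 0)^2)^(s-i) := by
      intro ε
      rw [rad_cons, rad_cons, sgn_true, sgn_false]
      rw [show a 0 * 1 + rad n (fun k => a k.succ) ε = rad n (fun k => a k.succ) ε + a 0 by ring,
        show a 0 * (-1) + rad n (fun k => a k.succ) ε = rad n (fun k => a k.succ) ε - a 0 by ring,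
        even_binom]
    rw [cube_sum_succ, Finset.sum_congr rfl (fun ε _ => hterm ε), ← Finset.mul_sum,
      Finset.sum_comm]
    have swap : ∀ i ∈ range (s+1),
        ∑ ε : Fin n → Bool, ((2*s).choose (2*i):ℝ) *
            (rad n (fun k => a k.succ) ε)^(2*i) * ((a 0)^2)^(s-i)
        = ((2*s).choose (2*i):ℝ) *
            (∑ ε : Fin n → Bool, (rad n (fun k => a k.succ) ε)^(2*i)) * ((a 0)^2)^(s-i) := by
      intro i _
      rw [← Finset.sum_mul, ← Finset.mul_sum]
    rw [Finset.sum_congr rfl swap]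
    have step1 : ∀ i ∈ range (s+1),
        ((2*s).choose (2*i):ℝ) *
            (∑ ε : Fin n → Bool, (rad n (fun k => a k.succ) ε)^(2*i)) * ((a 0)^2)^(s-i)
        ≤ ((khc s:ℝ) * (s.choose i)) * (2^n * (∑ k : Fin n, (a k.succ)^2)^i) * ((a 0)^2)^(s-i) := by
      intro i hi
      have hi' : i ≤ s := by simpa [Nat.lt_succ_iff] using Finset.mem_range.1 hi
      have hIH := ih (fun k => a k.succ) i
      have hle : (((2*s).choose (2*i) : ℕ) * (khc i : ℕ) : ℝ) ≤ ((khc s : ℕ) * (s.choose i) : ℝ) := by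
        exact_mod_cast khc_choose_le s i hi'
      calc ((2*s).choose (2*i):ℝ) * (∑ ε : Fin n → Bool, (rad n (fun k => a k.succ) ε)^(2*i)) * ((a 0)^2)^(s-i)
          ≤ ((2*s).choose (2*i):ℝ) * ((khc i : ℝ) * 2^n * (∑ k : Fin n, (a k.succ)^2)^i) * ((a 0)^2)^(s-i) := by
            refine mul_le_mul_of_nonneg_right (mul_le_mul_of_nonneg_left hIH (by positivity)) (by positivity)
        _ = (((2*s).choose (2*i):ℝ) * (khc i:ℝ)) * (2^n * (∑ k : Fin n, (a k.succ)^2)^i * ((a 0)^2)^(s-i)) := by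
            push_cast; ring
        _ ≤ ((khc s:ℝ) * (s.choose i)) * (2^n * (∑ k : Fin n, (a k.succ)^2)^i * ((a 0)^2)^(s-i)) := by
            refine mul_le_mul_of_nonneg_right ?_ (by positivity)
            push_cast at hle ⊢; exact hle
        _ = ((khc s:ℝ) * (s.choose i)) * (2^n * (∑ k : Fin n, (a k.succ)^2)^i) * ((a 0)^2)^(s-i) := by ring
    calc 2 * ∑ i ∈ range (s+1), ((2*s).choose (2*i):ℝ) *
            (∑ ε : Fin n → Bool, (rad n (fun k => a k.succ) ε)^(2*i)) * ((a 0)^2)^(s-i)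
        ≤ 2 * ∑ i ∈ range (s+1),
            ((khc s:ℝ) * (s.choose i)) * (2^n * (∑ k : Fin n, (a k.succ)^2)^i) * ((a 0)^2)^(s-i) := by
          exact mul_le_mul_of_nonneg_left (Finset.sum_le_sum step1) (by norm_num)
      _ = (khc s : ℝ) * 2^(n+1) * ∑ i ∈ range (s+1),
            (∑ k : Fin n, (a k.succ)^2)^i * ((a 0)^2)^(s-i) * (s.choose i : ℝ) := by
          rw [Finset.mul_sum, Finset.mul_sum]
          refine Finset.sum_congr rfl fun i _ => by push_cast; ring
      _ = (khc s : ℝ) * 2^(n+1) * ((∑ k : Fin n, (a k.succ)^2) + (a 0)^2)^s := by rw [← add_pow]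
      _ = (khc s : ℝ) * 2^(n+1) * (∑ k : Fin (n+1), (a k)^2)^s := by
          rw [Fin.sum_univ_succ]
          ring_nf


/-! ### Paley–Zygmund -/

lemma PZ (n : ℕ) (a : Fin n → ℝ) (hA : 0 < ∑ k, (a k)^2) :
    (3:ℝ)/16 * 2^n ≤
      ((Finset.univ.filter
        (fun ε : Fin n → Bool => Real.sqrt (∑ k, (a k)^2) / 2 < |rad n a ε|)).card : ℝ) := by
  set A := ∑ k, (a k)^2 with hA'
  set S := Finset.univ.filter
      (fun ε : Fin n → Bool => Real.sqrt A / 2 < |rad n a ε|) with hS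
  have hsq : Real.sqrt A ^ 2 = A := Real.sq_sqrt hA.le
  have e2 : ∑ ε : Fin n → Bool, (rad n a ε)^2 = 2^n * A := rad_sq n a
  have e4 : ∑ ε : Fin n → Bool, (rad n a ε)^4 ≤ 3 * 2^n * A^2 := by
    have := khintchine n a 2
    norm_num [khc] at this
    convert this using 2 <;> ring
  have hcomp : ∀ ε ∈ Finset.univ.filter
      (fun ε : Fin n → Bool => ¬ (Real.sqrt A / 2 < |rad n a ε|)), (rad n a ε)^2 ≤ A/4 := by
    intro ε hε
    have h1 : |rad n a ε| ≤ Real.sqrt A / 2 := by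
      have := (Finset.mem_filter.1 hε).2
      linarith [not_lt.1 this]
    have h2 : (rad n a ε)^2 = |rad n a ε|^2 := (sq_abs _).symm
    nlinarith [abs_nonneg (rad n a ε), Real.sqrt_nonneg A]
  have hcompsum : ∑ ε ∈ Finset.univ.filter
      (fun ε : Fin n → Bool => ¬ (Real.sqrt A / 2 < |rad n a ε|)), (rad n a ε)^2
      ≤ 2^n * (A/4) := by
    calc ∑ ε ∈ _, (rad n a ε)^2 ≤ ∑ _ε ∈ Finset.univ.filter
          (fun ε : Fin n → Bool => ¬ (Real.sqrt A / 2 < |rad n a ε|)), (A/4) :=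
        Finset.sum_le_sum hcomp
      _ = (Finset.univ.filter
          (fun ε : Fin n → Bool => ¬ (Real.sqrt A / 2 < |rad n a ε|))).card * (A/4) := by
        rw [Finset.sum_const, nsmul_eq_mul]
      _ ≤ 2^n * (A/4) := by
        have hcard : (Finset.univ.filter
            (fun ε : Fin n → Bool => ¬ (Real.sqrt A / 2 < |rad n a ε|))).card ≤ 2^n := by
          calc _ ≤ Finset.univ.card := Finset.card_filter_le _ _
            _ = 2^n := by rw [Finset.card_univ]; simp [Fintype.card_fun]
        have : ((Finset.univ.filter
            (fun ε : Fin n → Bool => ¬ (Real.sqrt A / 2 < |rad n a ε|))).card : ℝ) ≤ 2^n := by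
          exact_mod_cast hcard
        nlinarith
  have hsplit := Finset.sum_filter_add_sum_filter_not Finset.univ
      (fun ε : Fin n → Bool => Real.sqrt A / 2 < |rad n a ε|) (fun ε => (rad n a ε)^2)
  have hS2 : (3:ℝ)/4 * (2^n * A) ≤ ∑ ε ∈ S, (rad n a ε)^2 := by
    have : ∑ ε ∈ S, (rad n a ε)^2 = 2^n * A - ∑ ε ∈ Finset.univ.filter
        (fun ε : Fin n → Bool => ¬ (Real.sqrt A / 2 < |rad n a ε|)), (rad n a ε)^2 := by
      rw [← e2, ← hsplit, hS]; ring
    rw [this]; linarith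
  have hCS : (∑ ε ∈ S, (rad n a ε)^2)^2 ≤ (S.card : ℝ) * ∑ ε ∈ S, (rad n a ε)^4 := by
    have := Finset.sum_mul_sq_le_sq_mul_sq S (fun _ => (1:ℝ)) (fun ε => (rad n a ε)^2)
    simp only [one_mul, one_pow, Finset.sum_const, nsmul_eq_mul, mul_one] at this
    calc (∑ ε ∈ S, (rad n a ε)^2)^2 ≤ (S.card : ℝ) * ∑ ε ∈ S, ((rad n a ε)^2)^2 := this
      _ = (S.card : ℝ) * ∑ ε ∈ S, (rad n a ε)^4 := by
          congr 1; exact Finset.sum_congr rfl fun ε _ => by ring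
  have hS4 : ∑ ε ∈ S, (rad n a ε)^4 ≤ 3 * 2^n * A^2 := by
    refine le_trans (Finset.sum_le_sum_of_subset_of_nonneg (Finset.filter_subset _ _) ?_) e4
    intro ε _ _; positivity
  have hP : (0:ℝ) < 2^n := by positivity
  have hkey : ((3:ℝ)/4 * (2^n * A))^2 ≤ (S.card : ℝ) * (3 * 2^n * A^2) := by
    calc ((3:ℝ)/4 * (2^n * A))^2 ≤ (∑ ε ∈ S, (rad n a ε)^2)^2 := by
          have h0 : (0:ℝ) ≤ 3/4 * (2^n * A) := by positivity
          exact pow_le_pow_left₀ h0 hS2 2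
      _ ≤ (S.card : ℝ) * ∑ ε ∈ S, (rad n a ε)^4 := hCS
      _ ≤ (S.card : ℝ) * (3 * 2^n * A^2) := by
          exact mul_le_mul_of_nonneg_left hS4 (Nat.cast_nonneg _)
  nlinarith [hkey, mul_pos (mul_pos hP hA) (mul_pos hP hA), sq_nonneg A, mul_pos hP hA]

/-! ### Markov-type counting bound -/

lemma count_rad_le (n : ℕ) (a : Fin n → ℝ) (t : ℕ) (ht : 1 ≤ t) (j : ℕ) (B : ℝ) (hB : 0 < B)
    (hBpow : ((j:ℝ)+1) * B^(2*t) = (khc t : ℝ) * 2^n * (∑ k, (a k)^2)^t) :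
    ((Finset.univ.filter (fun ε : Fin n → Bool => B < |rad n a ε|)).card) ≤ j := by
  by_contra hcon
  push_neg at hcon
  set S := Finset.univ.filter (fun ε : Fin n → Bool => B < |rad n a ε|) with hS
  have hne : S.Nonempty := Finset.card_pos.mp (by omega)
  have hstrict : ∑ _ε ∈ S, B^(2*t) < ∑ ε ∈ S, (rad n a ε)^(2*t) := by
    refine Finset.sum_lt_sum_of_nonempty hne ?_
    intro ε hε
    have hmem : B < |rad n a ε| := (Finset.mem_filter.1 hε).2
    have : B^(2*t) < |rad n a ε|^(2*t) := by
      apply pow_lt_pow_left₀ hmem hB.le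
      omega
    calc B^(2*t) < |rad n a ε|^(2*t) := this
      _ = (rad n a ε)^(2*t) := by
        rw [pow_abs, abs_of_nonneg]
        rw [pow_mul]; positivity
  have hsum : ∑ ε ∈ S, (rad n a ε)^(2*t) ≤ (khc t : ℝ) * 2^n * (∑ k, (a k)^2)^t := by
    refine le_trans (Finset.sum_le_sum_of_subset_of_nonneg (Finset.filter_subset _ _) ?_)
      (khintchine n a t)
    intro ε _ _
    rw [pow_mul]; positivity
  have hconst : ∑ _ε ∈ S, B^(2*t) = (S.card : ℝ) * B^(2*t) := by
    rw [Finset.sum_const, nsmul_eq_mul]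
  have hcard : ((j:ℝ)+1) ≤ (S.card : ℝ) := by exact_mod_cast hcon
  have hBp : (0:ℝ) < B^(2*t) := by positivity
  nlinarith [hstrict, hsum, hconst, hcard, hBp]

/-! ### The embedding of the cube into ℕ and the basis vectors -/

noncomputable def enc (n : ℕ) : (Fin n → Bool) ≃ Fin (2^n) :=
  (Equiv.arrowCongr (Equiv.refl (Fin n)) finTwoEquiv.symm).trans finFunctionFinEquiv

noncomputable def XB (n : ℕ) (k : Fin n) : ℕ → ℝ :=
  fun i => if h : i < 2^n then sgn ((enc n).symm ⟨i, h⟩ k) else 0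

lemma X_sum_apply (n : ℕ) (a : Fin n → ℝ) (i : ℕ) :
    (∑ k, a k • XB n k) i = if h : i < 2^n then rad n a ((enc n).symm ⟨i,h⟩) else 0 := by
  rw [Finset.sum_apply]
  by_cases h : i < 2^n
  · rw [dif_pos h]
    refine Finset.sum_congr rfl fun k _ => ?_
    rw [Pi.smul_apply, XB, dif_pos h, smul_eq_mul]
  · rw [dif_neg h]
    refine Finset.sum_eq_zero fun k _ => ?_
    rw [Pi.smul_apply, XB, dif_neg h, smul_eq_mul, mul_zero]

lemma sum_apply_encval (n : ℕ) (a : Fin n → ℝ) (ε : Fin n → Bool) :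
    (∑ k, a k • XB n k) ((enc n ε : Fin (2^n)) : ℕ) = rad n a ε := by
  rw [X_sum_apply, dif_pos (enc n ε).isLt]
  congr 1
  have : (⟨((enc n ε : Fin (2^n)) : ℕ), (enc n ε).isLt⟩ : Fin (2^n)) = enc n ε := by
    apply Fin.ext; rfl
  rw [this, Equiv.symm_apply_apply]

lemma linearIndependent_XB (n : ℕ) : LinearIndependent ℝ (XB n) := by
  rw [Fintype.linearIndependent_iff]
  intro g hg
  have hv : ∀ ε : Fin n → Bool, rad n g ε = 0 := by
    intro ε
    have := congrFun hg ((enc n ε : Fin (2^n)) : ℕ)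
    rwa [sum_apply_encval] at this
  have h0 : ∑ k', g k' = 0 := by
    have h := hv (fun _ => false)
    rw [rad] at h
    simp only [sgn_false, mul_neg_one] at h
    rw [Finset.sum_neg_distrib] at h
    linarith
  intro k
  have hk := hv (Function.update (fun _ => false) k true)
  rw [rad] at hk
  have hterm : ∀ k' : Fin n, g k' * sgn (Function.update (fun _ => false) k true k')
      = -g k' + (if k' = k then 2 * g k' else 0) := by
    intro k'
    rcases eq_or_ne k' k with h|h
    · subst h
      simp [Function.update_self, sgn]
      ring
    · rw [Function.update_of_ne h]
      simp only [sgn_false, if_neg h]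
      ring
  rw [Finset.sum_congr rfl (fun k' _ => hterm k'), Finset.sum_add_distrib,
    Finset.sum_neg_distrib, h0, Finset.sum_ite_eq' Finset.univ k (fun k' => 2 * g k')] at hk
  simp at hk
  exact hk

lemma count_eq (n : ℕ) (a : Fin n → ℝ) (τ : ℝ) (hτ : 0 ≤ τ) :
    {i : ℕ | τ < |(∑ k, a k • XB n k) i|}.encard
      = ((Finset.univ.filter (fun ε : Fin n → Bool => τ < |rad n a ε|)).card : ℕ∞) := by
  have hset : {i : ℕ | τ < |(∑ k, a k • XB n k) i|}
      = ↑((Finset.range (2^n)).filter (fun i => τ < |(∑ k, a k • XB n k) i|)) := by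
    ext i
    simp only [Finset.coe_filter, Finset.mem_range, Set.mem_setOf_eq]
    constructor
    · intro hi
      refine ⟨?_, hi⟩
      by_contra hlt
      push_neg at hlt
      rw [X_sum_apply, dif_neg (by omega)] at hi
      rw [abs_zero] at hi
      linarith
    · exact fun h => h.2
  rw [hset, Set.encard_coe_eq_coe_finsetCard]
  norm_cast
  symm
  apply Finset.card_bij (fun ε _ => ((enc n ε : Fin (2^n)) : ℕ))
  · intro ε hε
    rw [Finset.mem_filter]
    refine ⟨Finset.mem_range.2 (enc n ε).isLt, ?_⟩
    rw [sum_apply_encval]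
    exact (Finset.mem_filter.1 hε).2
  · intro ε₁ _ ε₂ _ h
    exact (enc n).injective (Fin.ext h)
  · intro i hi
    obtain ⟨hir, hiP⟩ := Finset.mem_filter.1 hi
    have h : i < 2^n := Finset.mem_range.1 hir
    refine ⟨(enc n).symm ⟨i, h⟩, ?_, ?_⟩
    · rw [Finset.mem_filter]
      refine ⟨Finset.mem_univ _, ?_⟩
      rw [X_sum_apply, dif_pos h] at hiP
      exact hiP
    · rw [Equiv.apply_symm_apply]

/-! ### rearr basic lemmas -/

lemma rearr_nonneg (u : ℕ → ℝ) (j : ℕ) : 0 ≤ rearr u j :=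
  Real.sInf_nonneg (fun _ hx => hx.1)

lemma rearr_le (u : ℕ → ℝ) (j : ℕ) (τ : ℝ) (hτ : 0 ≤ τ)
    (h : Set.encard {i : ℕ | τ < |u i|} ≤ (j:ℕ∞)) : rearr u j ≤ τ :=
  csInf_le ⟨0, fun _ hx => hx.1⟩ ⟨hτ, h⟩

lemma rearr_ge (u : ℕ → ℝ) (j : ℕ) (c : ℝ) (hc : 0 ≤ c) (T : ℝ) (hT : 0 ≤ T)
    (hTe : Set.encard {i : ℕ | T < |u i|} ≤ (j:ℕ∞))
    (h : ∀ τ, 0 ≤ τ → τ < c → (j:ℕ∞) < Set.encard {i : ℕ | τ < |u i|}) :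
    c ≤ rearr u j := by
  refine le_csInf ⟨T, ⟨hT, hTe⟩⟩ ?_
  rintro b ⟨hb0, hbe⟩
  by_contra hbc
  push_neg at hbc
  exact absurd hbe (not_le.mpr (h b hb0 hbc))


/-! ### Dyadic sum estimates -/

lemma sum_rpow_le (β : ℝ) (hβ : 0 < β) (n : ℕ) :
    ∑ j ∈ range (2^n), ((j:ℝ)+1)^(β-1)
      ≤ (1 + 1/((2:ℝ)^β - 1)) * ((2:ℝ)^n)^β := by
  have h2β : 1 < (2:ℝ)^β := Real.one_lt_rpow (by norm_num) hβ
  have hC1 : 1 ≤ 1 + 1/((2:ℝ)^β - 1) := by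
    have : 0 < (2:ℝ)^β - 1 := by linarith
    have : 0 ≤ 1/((2:ℝ)^β - 1) := by positivity
    linarith
  have hN : (0:ℝ) < (2:ℝ)^n := by positivity
  have hNβ : (0:ℝ) ≤ ((2:ℝ)^n)^β := Real.rpow_nonneg hN.le _
  rcases le_or_gt 1 β with hβ1 | hβ1
  · calc ∑ j ∈ range (2^n), ((j:ℝ)+1)^(β-1)
        ≤ ∑ _j ∈ range (2^n), ((2:ℝ)^n)^(β-1) := by
          refine Finset.sum_le_sum fun j hj => ?_
          refine Real.rpow_le_rpow (by positivity) ?_ (by linarith)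
          have h := Finset.mem_range.1 hj
          have : (j:ℝ)+1 ≤ ((2^n : ℕ):ℝ) := by exact_mod_cast Nat.succ_le_of_lt h
          calc (j:ℝ)+1 ≤ ((2^n : ℕ):ℝ) := this
            _ = (2:ℝ)^n := by push_cast; ring
      _ = ((2^n : ℕ):ℝ) * ((2:ℝ)^n)^(β-1) := by
          rw [Finset.sum_const, Finset.card_range, nsmul_eq_mul]
      _ = ((2:ℝ)^n)^β := by
          have hc : ((2^n : ℕ):ℝ) = (2:ℝ)^n := by push_cast; ring
          rw [hc, show β = 1 + (β-1) by ring, Real.rpow_add hN, Real.rpow_one]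
          ring_nf
      _ ≤ (1 + 1/((2:ℝ)^β - 1)) * ((2:ℝ)^n)^β := le_mul_of_one_le_left hNβ hC1
  · have aux : ∀ m : ℕ, ∑ j ∈ range (2^m), ((j:ℝ)+1)^(β-1)
        ≤ 1 + ∑ l ∈ range m, ((2:ℝ)^β)^l := by
      intro m
      induction m with
      | zero => simp
      | succ m ih =>
        have hle : (2:ℕ)^m ≤ 2^(m+1) := Nat.pow_le_pow_right (by norm_num) (Nat.le_succ m)
        have hsplit : ∑ j ∈ range (2^(m+1)), ((j:ℝ)+1)^(β-1)
            = (∑ j ∈ range (2^m), ((j:ℝ)+1)^(β-1))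
              + ∑ j ∈ Finset.Ico ((2:ℕ)^m) (2^(m+1)), ((j:ℝ)+1)^(β-1) := by
          simp only [Finset.range_eq_Ico]
          exact (Finset.sum_Ico_consecutive _ (Nat.zero_le _) hle).symm
        have hblock : ∑ j ∈ Finset.Ico ((2:ℕ)^m) (2^(m+1)), ((j:ℝ)+1)^(β-1) ≤ ((2:ℝ)^β)^m := by
          have hP : (0:ℝ) < (2:ℝ)^m := by positivity
          calc ∑ j ∈ Finset.Ico ((2:ℕ)^m) (2^(m+1)), ((j:ℝ)+1)^(β-1)
              ≤ ∑ _j ∈ Finset.Ico ((2:ℕ)^m) (2^(m+1)), ((2:ℝ)^m)^(β-1) := by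
                refine Finset.sum_le_sum fun j hj => ?_
                have h1 : 2^m ≤ j := (Finset.mem_Ico.1 hj).1
                have h2 : (2:ℝ)^m ≤ (j:ℝ)+1 := by
                  have : ((2^m : ℕ):ℝ) ≤ (j:ℝ) := by exact_mod_cast h1
                  have hc : ((2^m : ℕ):ℝ) = (2:ℝ)^m := by push_cast; ring
                  linarith [hc ▸ this]
                exact Real.rpow_le_rpow_of_nonpos hP h2 (by linarith)
            _ = ((2^m:ℕ):ℝ) * ((2:ℝ)^m)^(β-1) := by
                rw [Finset.sum_const, nsmul_eq_mul, Nat.card_Ico]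
                congr 2
                · have : (2:ℕ)^(m+1) = 2^m + 2^m := by ring
                  omega
            _ = ((2:ℝ)^m)^β := by
                have hc : ((2^m : ℕ):ℝ) = (2:ℝ)^m := by push_cast; ring
                rw [hc, show β = 1 + (β-1) by ring, Real.rpow_add hP, Real.rpow_one]
                ring_nf
            _ = ((2:ℝ)^β)^m := by
                rw [← Real.rpow_natCast (2:ℝ) m, ← Real.rpow_natCast ((2:ℝ)^β) m,
                  ← Real.rpow_mul (by norm_num), ← Real.rpow_mul (by norm_num)]
                ring_nf
        calc ∑ j ∈ range (2^(m+1)), ((j:ℝ)+1)^(β-1)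
            ≤ (1 + ∑ l ∈ range m, ((2:ℝ)^β)^l) + ((2:ℝ)^β)^m := by
              rw [hsplit]; exact add_le_add ih hblock
          _ = 1 + ∑ l ∈ range (m+1), ((2:ℝ)^β)^l := by
              rw [Finset.sum_range_succ]; ring
    have geo : ∑ l ∈ range n, ((2:ℝ)^β)^l = (((2:ℝ)^β)^n - 1)/((2:ℝ)^β - 1) :=
      geom_sum_eq (ne_of_gt h2β) n
    have hpow : ((2:ℝ)^β)^n = ((2:ℝ)^n)^β := by
      rw [← Real.rpow_natCast (2:ℝ) n, ← Real.rpow_natCast ((2:ℝ)^β) n,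
        ← Real.rpow_mul (by norm_num), ← Real.rpow_mul (by norm_num)]
      ring_nf
    have hd : 0 < (2:ℝ)^β - 1 := by linarith
    have h1n : 1 ≤ ((2:ℝ)^β)^n := one_le_pow₀ h2β.le
    calc ∑ j ∈ range (2^n), ((j:ℝ)+1)^(β-1) ≤ 1 + ∑ l ∈ range n, ((2:ℝ)^β)^l := aux n
      _ = 1 + (((2:ℝ)^β)^n - 1)/((2:ℝ)^β - 1) := by rw [geo]
      _ ≤ (1 + 1/((2:ℝ)^β - 1)) * ((2:ℝ)^β)^n := by
          have expand : (1 + 1/((2:ℝ)^β-1)) * ((2:ℝ)^β)^n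
              - (1 + (((2:ℝ)^β)^n - 1)/((2:ℝ)^β-1))
              = (((2:ℝ)^β)^n - 1) + 1/((2:ℝ)^β-1) := by
            field_simp
            ring
          have hdp : 0 < 1/((2:ℝ)^β-1) := by positivity
          linarith [expand.ge, expand.le]
      _ = (1 + 1/((2:ℝ)^β - 1)) * ((2:ℝ)^n)^β := by rw [hpow]

lemma sum_rpow_ge (γ : ℝ) (hγ : 0 < γ) (M : ℕ) (hM : 1 ≤ M) :
    (2:ℝ)^(-γ) * (M:ℝ)^γ ≤ ∑ j ∈ range M, ((j:ℝ)+1)^(γ-1) := by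
  have hM0 : (0:ℝ) < M := by exact_mod_cast hM
  have h2γpos : (0:ℝ) < (2:ℝ)^(-γ) := Real.rpow_pos_of_pos (by norm_num) _
  rcases le_or_gt γ 1 with hγ1 | hγ1
  · have h2le : (2:ℝ)^(-γ) ≤ 1 :=
      Real.rpow_le_one_of_one_le_of_nonpos (by norm_num) (by linarith)
    have hMγ : (0:ℝ) ≤ (M:ℝ)^γ := Real.rpow_nonneg hM0.le _
    have hsum : (M:ℝ) * (M:ℝ)^(γ-1) ≤ ∑ j ∈ range M, ((j:ℝ)+1)^(γ-1) := by
      calc (M:ℝ) * (M:ℝ)^(γ-1) = ∑ _j ∈ range M, (M:ℝ)^(γ-1) := by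
            rw [Finset.sum_const, Finset.card_range, nsmul_eq_mul]
        _ ≤ ∑ j ∈ range M, ((j:ℝ)+1)^(γ-1) := by
            refine Finset.sum_le_sum fun j hj => ?_
            have h1 : (j:ℝ)+1 ≤ (M:ℝ) := by
              exact_mod_cast Nat.succ_le_of_lt (Finset.mem_range.1 hj)
            exact Real.rpow_le_rpow_of_nonpos (by positivity) h1 (by linarith)
    have hMM : (M:ℝ) * (M:ℝ)^(γ-1) = (M:ℝ)^γ := by
      rw [show γ = 1 + (γ-1) by ring, Real.rpow_add hM0, Real.rpow_one]
      ring_nf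
    calc (2:ℝ)^(-γ) * (M:ℝ)^γ ≤ 1 * (M:ℝ)^γ := mul_le_mul_of_nonneg_right h2le hMγ
      _ = (M:ℝ) * (M:ℝ)^(γ-1) := by rw [one_mul, hMM]
      _ ≤ _ := hsum
  · set m := M/2 with hm
    have hm2 : (M:ℝ)/2 ≤ ((M - m : ℕ):ℝ) := by
      have : 2*(M - m) ≥ M := by omega
      have h2 : (M:ℝ) ≤ 2*((M-m:ℕ):ℝ) := by exact_mod_cast this
      linarith
    have hhalf : (0:ℝ) < (M:ℝ)/2 := by linarith
    have hterm : ∀ j ∈ Finset.Ico m M, ((M:ℝ)/2)^(γ-1) ≤ ((j:ℝ)+1)^(γ-1) := by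
      intro j hj
      have h1 : m ≤ j := (Finset.mem_Ico.1 hj).1
      have h2 : (M:ℝ)/2 ≤ (j:ℝ)+1 := by
        have : M ≤ 2*j+2 := by omega
        have h3 : (M:ℝ) ≤ 2*(j:ℝ)+2 := by exact_mod_cast this
        linarith
      exact Real.rpow_le_rpow hhalf.le h2 (by linarith)
    have hMM : ((M:ℝ)/2) * ((M:ℝ)/2)^(γ-1) = ((M:ℝ)/2)^γ := by
      rw [show γ = 1 + (γ-1) by ring, Real.rpow_add hhalf, Real.rpow_one]
      ring_nf
    have heq : (2:ℝ)^(-γ) * (M:ℝ)^γ = ((M:ℝ)/2)^γ := by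
      rw [Real.div_rpow hM0.le (by norm_num), Real.rpow_neg (by norm_num)]
      rw [div_eq_mul_inv]
      ring
    calc (2:ℝ)^(-γ) * (M:ℝ)^γ = ((M:ℝ)/2)^γ := heq
      _ = ((M:ℝ)/2) * ((M:ℝ)/2)^(γ-1) := hMM.symm
      _ ≤ ((M - m:ℕ):ℝ) * ((M:ℝ)/2)^(γ-1) := by
          refine mul_le_mul_of_nonneg_right hm2 ?_
          exact Real.rpow_nonneg hhalf.le _
      _ = ∑ _j ∈ Finset.Ico m M, ((M:ℝ)/2)^(γ-1) := by
          rw [Finset.sum_const, nsmul_eq_mul, Nat.card_Ico]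
      _ ≤ ∑ j ∈ Finset.Ico m M, ((j:ℝ)+1)^(γ-1) := Finset.sum_le_sum hterm
      _ ≤ ∑ j ∈ range M, ((j:ℝ)+1)^(γ-1) := by
          refine Finset.sum_le_sum_of_subset_of_nonneg ?_ ?_
          · rw [Finset.range_eq_Ico]
            exact Finset.Ico_subset_Ico (Nat.zero_le _) le_rfl
          · intro j _ _
            positivity


/-- The rearrangement vanishes beyond the support. -/
lemma rearr_XB_zero (n : ℕ) (a : Fin n → ℝ) (j : ℕ) (hj : 2^n ≤ j) :
    rearr (∑ k, a k • XB n k) j = 0 := by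
  refine le_antisymm (rearr_le _ _ 0 le_rfl ?_) (rearr_nonneg _ _)
  rw [count_eq n a 0 le_rfl]
  have h1 : (Finset.univ.filter (fun ε : Fin n → Bool => (0:ℝ) < |rad n a ε|)).card ≤ j := by
    calc _ ≤ Finset.univ.card := Finset.card_filter_le _ _
      _ = 2^n := by rw [Finset.card_univ]; simp [Fintype.card_fun]
      _ ≤ j := hj
  exact_mod_cast Nat.cast_le.mpr h1

/-- Closed form of the Lorentz norm of elements of our subspace. -/
lemma lorentzNorm_XB (p q : ℝ) (hq : 0 < q) (n : ℕ) (a : Fin n → ℝ) :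
    lorentzNorm p q (∑ k, a k • XB n k) =
      (ENNReal.ofReal (∑ j ∈ range (2^n),
        ((j:ℝ)+1)^(q/p-1) * rearr (∑ k, a k • XB n k) j ^ q))^(1/q) := by
  unfold lorentzNorm
  congr 1
  rw [tsum_eq_sum (s := Finset.range (2^n)) ?_]
  · rw [ENNReal.ofReal_sum_of_nonneg]
    intro j _
    exact mul_nonneg (Real.rpow_nonneg (by positivity) _)
      (Real.rpow_nonneg (rearr_nonneg _ _) _)
  · intro j hj
    have hj' : 2^n ≤ j := by
      by_contra h
      exact hj (Finset.mem_range.2 (by omega))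
    rw [rearr_XB_zero n a j hj', Real.zero_rpow hq.ne', mul_zero, ENNReal.ofReal_zero]


end LorentzAux

open LorentzAux Finset

set_option maxHeartbeats 2000000 in
/-- The Bernstein numbers of the embedding `id : ℓ_{p,q} → ℓ_{p,r}` (for
`0 < p < ∞`, `0 < q < r ≤ ∞`) are bounded below by some `α > 0`: for every
`n` there is an `n`-dimensional subspace of `ℓ_{p,q}` on whose `ℓ_{p,q}`-unit
sphere the `ℓ_{p,r}` norm is at least `α`.  In particular the embedding is not
finitely strictly singular. -/
theorem bernstein_numbers_bounded_below (p q : ℝ) (r : ℝ≥0∞)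
    (hp : 0 < p) (hq : 0 < q) (hqr : ENNReal.ofReal q < r) :
    ∃ α : ℝ, 0 < α ∧ ∀ n : ℕ, ∃ E : Submodule ℝ (ℕ → ℝ),
      Module.finrank ℝ E = n ∧
      (∀ x ∈ E, lorentzNorm p q x ≠ ⊤) ∧
      ∀ x ∈ E, lorentzNorm p q x = 1 → ENNReal.ofReal α ≤ lorentzNormE p r x := by
  classical
  set t : ℕ := ⌈p⌉₊ + 1 with htdef
  have ht1 : 1 ≤ t := by omega
  have htR : (t:ℝ) = (⌈p⌉₊:ℝ) + 1 := by rw [htdef]; push_cast; ring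
  have htp : p < 2*(t:ℝ) := by
    have h1 : p ≤ (⌈p⌉₊ : ℝ) := Nat.le_ceil p
    have h2 : (0:ℝ) ≤ (⌈p⌉₊ : ℝ) := Nat.cast_nonneg _
    rw [htR]; linarith
  have ht0 : (0:ℝ) < t := by rw [htR]; positivity
  set β := q/p - q/(2*(t:ℝ)) with hβdef
  have hβ : 0 < β := by
    have h1 : q/(2*(t:ℝ)) < q/p := div_lt_div_of_pos_left hq hp htp
    rw [hβdef]; linarith
  have h2β : 1 < (2:ℝ)^β := Real.one_lt_rpow (by norm_num) hβ
  set ρC := 1 + 1/((2:ℝ)^β - 1) with hρCdef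
  have hρCpos : 0 < ρC := by
    have : 0 < 1/((2:ℝ)^β - 1) := by
      have : (0:ℝ) < (2:ℝ)^β - 1 := by linarith
      positivity
    rw [hρCdef]; linarith
  set KH := ((khc t : ℕ):ℝ) with hKHdef
  have hKHpos : 0 < KH := by rw [hKHdef]; exact_mod_cast khc_pos t
  set C1 := ρC * KH^(q/(2*(t:ℝ))) with hC1def
  have hC1pos : 0 < C1 := by
    rw [hC1def]
    have : 0 < KH^(q/(2*(t:ℝ))) := Real.rpow_pos_of_pos hKHpos _
    positivity
  set c1 := (1/C1)^(1/q) with hc1def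
  have hc1pos : 0 < c1 := Real.rpow_pos_of_pos (by positivity) _
  set α := (3/32:ℝ)^(1/p) * c1 / 2 with hαdef
  have h332pos : (0:ℝ) < (3/32:ℝ)^(1/p) := Real.rpow_pos_of_pos (by norm_num) _
  have hαpos : 0 < α := by rw [hαdef]; positivity
  refine ⟨α, hαpos, fun n => ⟨Submodule.span ℝ (Set.range (XB n)), ?_, ?_, ?_⟩⟩
  · rw [finrank_span_eq_card (linearIndependent_XB n)]
    simp
  · intro x hx
    obtain ⟨a, ha⟩ := (Submodule.mem_span_range_iff_exists_fun ℝ).1 hx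
    rw [← ha, lorentzNorm_XB p q hq n a]
    exact ENNReal.rpow_ne_top_of_nonneg (by positivity) ENNReal.ofReal_ne_top
  · intro x hx hx1
    obtain ⟨a, ha⟩ := (Submodule.mem_span_range_iff_exists_fun ℝ).1 hx
    rw [← ha] at hx1 ⊢
    set A := ∑ k, (a k)^2 with hAdef
    have hA0 : (0:ℝ) ≤ A := by rw [hAdef]; positivity
    rw [lorentzNorm_XB p q hq n a] at hx1
    set S := ∑ j ∈ range (2^n),
        ((j:ℝ)+1)^(q/p-1) * rearr (∑ k, a k • XB n k) j ^ q with hSdef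
    have hS1 : S = 1 := by
      have h2 : ((ENNReal.ofReal S)^(1/q))^q = (1:ℝ≥0∞)^q := by rw [hx1]
      rw [← ENNReal.rpow_mul, one_div, inv_mul_cancel₀ hq.ne', ENNReal.rpow_one,
        ENNReal.one_rpow] at h2
      exact ENNReal.ofReal_eq_one.1 h2
    have hApos : 0 < A := by
      rcases hA0.lt_or_eq with h | h
      · exact h
      · exfalso
        have haz : ∀ k, a k = 0 := by
          intro k
          have h0 := (Finset.sum_eq_zero_iff_of_nonneg
            (fun k _ => sq_nonneg (a k))).1 h.symm k (Finset.mem_univ k)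
          exact pow_eq_zero_iff (two_ne_zero) |>.1 h0
        have hu0 : ∀ j, rearr (∑ k, a k • XB n k) j = 0 := by
          intro j
          refine le_antisymm (rearr_le _ _ 0 le_rfl ?_) (rearr_nonneg _ _)
          rw [count_eq n a 0 le_rfl]
          have hcz : (Finset.univ.filter
              (fun ε : Fin n → Bool => (0:ℝ) < |rad n a ε|)).card = 0 := by
            rw [Finset.card_eq_zero, Finset.filter_eq_empty_iff]
            intro ε _
            simp [rad, haz]
          rw [hcz]
          exact_mod_cast Nat.cast_le.mpr (Nat.zero_le j)
        have hS0 : S = 0 := by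
          rw [hSdef]
          exact Finset.sum_eq_zero fun j _ => by
            rw [hu0 j, Real.zero_rpow hq.ne', mul_zero]
        rw [hS0] at hS1
        norm_num at hS1
    -- Upper bound: 1 = S ≤ C1 * ((2^n)^(1/p) * √A)^q
    set D := KH * (2:ℝ)^n * A^t with hDdef
    have hDpos : 0 < D := by rw [hDdef]; positivity
    have hrle : ∀ j : ℕ, rearr (∑ k, a k • XB n k) j
        ≤ (D/((j:ℝ)+1))^(1/(2*(t:ℝ))) := by
      intro j
      have hdj : (0:ℝ) < D/((j:ℝ)+1) := by positivity
      have hBpos : (0:ℝ) < (D/((j:ℝ)+1))^(1/(2*(t:ℝ))) := Real.rpow_pos_of_pos hdj _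
      have hpow : ((D/((j:ℝ)+1))^(1/(2*(t:ℝ))))^(2*t) = D/((j:ℝ)+1) := by
        rw [← Real.rpow_natCast ((D/((j:ℝ)+1))^(1/(2*(t:ℝ)))) (2*t),
          ← Real.rpow_mul hdj.le,
          show 1/(2*(t:ℝ)) * ((2*t : ℕ):ℝ) = 1 by push_cast; field_simp,
          Real.rpow_one]
      have hBpow : ((j:ℝ)+1) * ((D/((j:ℝ)+1))^(1/(2*(t:ℝ))))^(2*t)
          = (khc t : ℝ) * 2^n * A^t := by
        rw [hpow]
        have hne : ((j:ℝ)+1) ≠ 0 := by positivity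
        field_simp
        rw [hDdef, hKHdef]
      apply rearr_le _ _ _ hBpos.le
      rw [count_eq n a _ hBpos.le]
      exact_mod_cast Nat.cast_le.mpr (count_rad_le n a t ht1 j _ hBpos hBpow)
    have hterm : ∀ j ∈ range (2^n),
        ((j:ℝ)+1)^(q/p-1) * rearr (∑ k, a k • XB n k) j ^ q
        ≤ D^(q/(2*(t:ℝ))) * ((j:ℝ)+1)^(β-1) := by
      intro j _
      have hj1 : (0:ℝ) < (j:ℝ)+1 := by positivity
      have h1 : rearr (∑ k, a k • XB n k) j ^ q
          ≤ (D/((j:ℝ)+1))^((1/(2*(t:ℝ)))*q) := by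
        calc rearr (∑ k, a k • XB n k) j ^ q
            ≤ ((D/((j:ℝ)+1))^(1/(2*(t:ℝ))))^q :=
              Real.rpow_le_rpow (rearr_nonneg _ _) (hrle j) hq.le
          _ = (D/((j:ℝ)+1))^((1/(2*(t:ℝ)))*q) := (Real.rpow_mul (by positivity) _ _).symm
      have hsplit : ((j:ℝ)+1)^(β-1)
          = ((j:ℝ)+1)^(q/p-1) / ((j:ℝ)+1)^(q/(2*(t:ℝ))) := by
        rw [← Real.rpow_sub hj1]
        congr 1
        rw [hβdef]; ring
      calc ((j:ℝ)+1)^(q/p-1) * rearr (∑ k, a k • XB n k) j ^ q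
          ≤ ((j:ℝ)+1)^(q/p-1) * (D/((j:ℝ)+1))^((1/(2*(t:ℝ)))*q) :=
            mul_le_mul_of_nonneg_left h1 (Real.rpow_nonneg hj1.le _)
        _ = D^(q/(2*(t:ℝ))) * ((j:ℝ)+1)^(β-1) := by
            rw [Real.div_rpow hDpos.le hj1.le,
              show (1/(2*(t:ℝ)))*q = q/(2*(t:ℝ)) by ring, hsplit]
            rw [div_eq_mul_inv, div_eq_mul_inv]
            ring
    have hSle : S ≤ D^(q/(2*(t:ℝ))) * (ρC * ((2:ℝ)^n)^β) := by
      calc S ≤ ∑ j ∈ range (2^n), D^(q/(2*(t:ℝ))) * ((j:ℝ)+1)^(β-1) :=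
            Finset.sum_le_sum hterm
        _ = D^(q/(2*(t:ℝ))) * ∑ j ∈ range (2^n), ((j:ℝ)+1)^(β-1) := by
            rw [Finset.mul_sum]
        _ ≤ _ := mul_le_mul_of_nonneg_left (sum_rpow_le β hβ n)
            (Real.rpow_nonneg hDpos.le _)
    have hDq : D^(q/(2*(t:ℝ)))
        = KH^(q/(2*(t:ℝ))) * ((2:ℝ)^n)^(q/(2*(t:ℝ))) * A^(q/2) := by
      rw [hDdef, Real.mul_rpow (by positivity) (by positivity),
        Real.mul_rpow (by positivity) (by positivity)]
      congr 1
      rw [← Real.rpow_natCast A t, ← Real.rpow_mul hApos.le]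
      congr 1
      field_simp
    have hmain : 1 ≤ C1 * (((2:ℝ)^n)^(1/p) * A^((1:ℝ)/2))^q := by
      have hxq : (((2:ℝ)^n)^(1/p) * A^((1:ℝ)/2))^q
          = ((2:ℝ)^n)^(q/p) * A^(q/2) := by
        rw [Real.mul_rpow (Real.rpow_nonneg (by positivity) _)
          (Real.rpow_nonneg hApos.le _),
          ← Real.rpow_mul (by positivity), ← Real.rpow_mul hApos.le,
          show 1/p*q = q/p by ring, show (1:ℝ)/2*q = q/2 by ring]
      rw [hxq]
      have hexp : ((2:ℝ)^n)^(q/(2*(t:ℝ))) * ((2:ℝ)^n)^β = ((2:ℝ)^n)^(q/p) := by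
        rw [← Real.rpow_add (by positivity)]
        congr 1
        rw [hβdef]; ring
      calc (1:ℝ) = S := hS1.symm
        _ ≤ D^(q/(2*(t:ℝ))) * (ρC * ((2:ℝ)^n)^β) := hSle
        _ = C1 * (((2:ℝ)^n)^(q/p) * A^(q/2)) := by
            rw [hDq, hC1def, ← hexp]; ring
    have hkey : c1 ≤ ((2:ℝ)^n)^(1/p) * A^((1:ℝ)/2) := by
      have hxpos : (0:ℝ) ≤ ((2:ℝ)^n)^(1/p) * A^((1:ℝ)/2) :=
        mul_nonneg (Real.rpow_nonneg (by positivity) _) (Real.rpow_nonneg hApos.le _)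
      have h2 : 1/C1 ≤ (((2:ℝ)^n)^(1/p) * A^((1:ℝ)/2))^q := by
        rw [div_le_iff₀ hC1pos]
        calc (1:ℝ) ≤ C1 * (((2:ℝ)^n)^(1/p) * A^((1:ℝ)/2))^q := hmain
          _ = (((2:ℝ)^n)^(1/p) * A^((1:ℝ)/2))^q * C1 := by ring
      calc c1 = (1/C1)^(1/q) := hc1def
        _ ≤ ((((2:ℝ)^n)^(1/p) * A^((1:ℝ)/2))^q)^(1/q) :=
            Real.rpow_le_rpow (by positivity) h2 (by positivity)
        _ = ((2:ℝ)^n)^(1/p) * A^((1:ℝ)/2) := by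
            rw [← Real.rpow_mul hxpos, mul_one_div, div_self hq.ne', Real.rpow_one]
    -- Lower bound via Paley–Zygmund
    set M := (Finset.univ.filter
      (fun ε : Fin n → Bool => Real.sqrt A / 2 < |rad n a ε|)).card with hMdef
    have hMge : (3:ℝ)/16 * 2^n ≤ (M:ℝ) := PZ n a hApos
    have hM1 : 1 ≤ M := by
      have hp2 : (0:ℝ) < (3:ℝ)/16 * 2^n := by positivity
      have : (0:ℝ) < (M:ℝ) := lt_of_lt_of_le hp2 hMge
      exact_mod_cast Nat.one_le_cast.2 (by exact_mod_cast Nat.cast_pos.1 this)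
    have hrge : ∀ j : ℕ, j < M →
        Real.sqrt A / 2 ≤ rearr (∑ k, a k • XB n k) j := by
      intro j hj
      have hT0 : (0:ℝ) ≤ ∑ i ∈ range (2^n), |(∑ k, a k • XB n k) i| :=
        Finset.sum_nonneg fun i _ => abs_nonneg _
      have hTe : Set.encard {i : ℕ |
          (∑ i ∈ range (2^n), |(∑ k, a k • XB n k) i|) < |(∑ k, a k • XB n k) i|}
          ≤ (j:ℕ∞) := by
        rw [count_eq n a _ hT0]
        have hcz : (Finset.univ.filter (fun ε : Fin n → Bool =>
            (∑ i ∈ range (2^n), |(∑ k, a k • XB n k) i|) < |rad n a ε|)).card = 0 := by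
          rw [Finset.card_eq_zero, Finset.filter_eq_empty_iff]
          intro ε _
          rw [not_lt, ← sum_apply_encval n a ε]
          exact Finset.single_le_sum (f := fun i => |(∑ k, a k • XB n k) i|)
            (fun i _ => abs_nonneg _) (Finset.mem_range.2 (enc n ε).isLt)
        rw [hcz]
        exact_mod_cast Nat.cast_le.mpr (Nat.zero_le j)
      refine rearr_ge _ _ _ (by positivity) _ hT0 hTe ?_
      intro τ hτ0 hτc
      rw [count_eq n a τ hτ0]
      have hsub : (Finset.univ.filter
            (fun ε : Fin n → Bool => Real.sqrt A / 2 < |rad n a ε|))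
          ⊆ (Finset.univ.filter (fun ε : Fin n → Bool => τ < |rad n a ε|)) := by
        intro ε hε
        rw [Finset.mem_filter] at hε ⊢
        exact ⟨hε.1, hτc.trans hε.2⟩
      have hcard : M ≤ (Finset.univ.filter
          (fun ε : Fin n → Bool => τ < |rad n a ε|)).card := by
        rw [hMdef]; exact Finset.card_le_card hsub
      have hjM : j < (Finset.univ.filter
          (fun ε : Fin n → Bool => τ < |rad n a ε|)).card := lt_of_lt_of_le hj hcard
      exact_mod_cast Nat.cast_lt.mpr hjM
    have hsqrtA : Real.sqrt A = A^((1:ℝ)/2) := Real.sqrt_eq_rpow A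
    have h2p : (0:ℝ) < (2:ℝ)^(-(1:ℝ)/p) := Real.rpow_pos_of_pos (by norm_num) _
    have hcore : (3/32:ℝ)^(1/p) * c1
        ≤ (2:ℝ)^(-(1:ℝ)/p) * (M:ℝ)^(1/p) * Real.sqrt A := by
      have hMp : ((3:ℝ)/16 * 2^n)^(1/p) ≤ (M:ℝ)^(1/p) :=
        Real.rpow_le_rpow (by positivity) hMge (by positivity)
      have hsplit : ((3:ℝ)/16 * 2^n)^(1/p) = (3/16:ℝ)^(1/p) * ((2:ℝ)^n)^(1/p) :=
        Real.mul_rpow (by norm_num) (by positivity)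
      have h232 : (2:ℝ)^(-(1:ℝ)/p) * (3/16:ℝ)^(1/p) = (3/32:ℝ)^(1/p) := by
        rw [show (-(1:ℝ)/p) = -(1/p) by ring, Real.rpow_neg (by norm_num),
          ← Real.inv_rpow (by norm_num), ← Real.mul_rpow (by norm_num) (by norm_num)]
        norm_num
      calc (3/32:ℝ)^(1/p) * c1
          ≤ (3/32:ℝ)^(1/p) * (((2:ℝ)^n)^(1/p) * A^((1:ℝ)/2)) :=
            mul_le_mul_of_nonneg_left hkey h332pos.le
        _ = ((2:ℝ)^(-(1:ℝ)/p) * (3/16:ℝ)^(1/p)) * (((2:ℝ)^n)^(1/p) * A^((1:ℝ)/2)) := by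
            rw [h232]
        _ = (2:ℝ)^(-(1:ℝ)/p) * ((3/16:ℝ)^(1/p) * ((2:ℝ)^n)^(1/p)) * A^((1:ℝ)/2) := by
            ring
        _ = (2:ℝ)^(-(1:ℝ)/p) * ((3:ℝ)/16 * 2^n)^(1/p) * A^((1:ℝ)/2) := by rw [hsplit]
        _ ≤ (2:ℝ)^(-(1:ℝ)/p) * (M:ℝ)^(1/p) * A^((1:ℝ)/2) := by
            refine mul_le_mul_of_nonneg_right
              (mul_le_mul_of_nonneg_left hMp h2p.le) (Real.rpow_nonneg hApos.le _)
        _ = (2:ℝ)^(-(1:ℝ)/p) * (M:ℝ)^(1/p) * Real.sqrt A := by rw [hsqrtA]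
    unfold lorentzNormE
    split_ifs with hrtop
    · have h2p1 : (2:ℝ)^(-(1:ℝ)/p) ≤ 1 := by
        refine Real.rpow_le_one_of_one_le_of_nonpos (by norm_num) ?_
        rw [neg_div, neg_nonpos]
        positivity
      unfold lorentzNormInf
      refine le_trans ?_ (le_iSup (fun j : ℕ => ENNReal.ofReal
        (((j:ℝ)+1)^(1/p) * rearr (∑ k, a k • XB n k) j)) (M-1))
      apply ENNReal.ofReal_le_ofReal
      have hm1 : ((M-1:ℕ):ℝ) + 1 = (M:ℝ) := by
        have he : (M-1) + 1 = M := Nat.succ_pred_eq_of_pos hM1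
        calc ((M-1:ℕ):ℝ)+1 = ((M-1+1:ℕ):ℝ) := by push_cast; ring
          _ = (M:ℝ) := by rw [he]
      have hrM : Real.sqrt A / 2 ≤ rearr (∑ k, a k • XB n k) (M-1) :=
        hrge (M-1) (by omega)
      have hMp0 : (0:ℝ) ≤ (M:ℝ)^(1/p) * Real.sqrt A := by positivity
      calc α = (3/32:ℝ)^(1/p) * c1 / 2 := hαdef
        _ ≤ ((2:ℝ)^(-(1:ℝ)/p) * (M:ℝ)^(1/p) * Real.sqrt A)/2 := by linarith [hcore]
        _ ≤ ((M:ℝ)^(1/p) * Real.sqrt A)/2 := by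
            nlinarith [mul_le_of_le_one_left hMp0 h2p1]
        _ = (M:ℝ)^(1/p) * (Real.sqrt A / 2) := by ring
        _ ≤ (((M-1:ℕ):ℝ)+1)^(1/p) * rearr (∑ k, a k • XB n k) (M-1) := by
            rw [hm1]
            exact mul_le_mul_of_nonneg_left hrM (Real.rpow_nonneg (by positivity) _)
    · have hrne : r ≠ 0 := by
        intro h
        rw [h] at hqr
        simp at hqr
      have hr' : 0 < r.toReal := ENNReal.toReal_pos hrne hrtop
      unfold lorentzNorm
      have hterm0 : ∀ j ∈ range M, (0:ℝ) ≤
          ((j:ℝ)+1)^(r.toReal/p-1) * rearr (∑ k, a k • XB n k) j ^ r.toReal :=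
        fun j _ => mul_nonneg (Real.rpow_nonneg (by positivity) _)
          (Real.rpow_nonneg (rearr_nonneg _ _) _)
      have hW0 : (0:ℝ) ≤ (Real.sqrt A / 2)^r.toReal
          * ((2:ℝ)^(-(r.toReal/p)) * (M:ℝ)^(r.toReal/p)) := by positivity
      have htsum_ge : ENNReal.ofReal ((Real.sqrt A / 2)^r.toReal
            * ((2:ℝ)^(-(r.toReal/p)) * (M:ℝ)^(r.toReal/p)))
          ≤ ∑' j : ℕ, ENNReal.ofReal
            (((j:ℝ)+1)^(r.toReal/p-1) * rearr (∑ k, a k • XB n k) j ^ r.toReal) := by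
        refine le_trans ?_ (ENNReal.sum_le_tsum (Finset.range M))
        rw [← ENNReal.ofReal_sum_of_nonneg hterm0]
        apply ENNReal.ofReal_le_ofReal
        calc (Real.sqrt A / 2)^r.toReal
              * ((2:ℝ)^(-(r.toReal/p)) * (M:ℝ)^(r.toReal/p))
            ≤ (Real.sqrt A / 2)^r.toReal * ∑ j ∈ range M, ((j:ℝ)+1)^(r.toReal/p-1) :=
              mul_le_mul_of_nonneg_left
                (sum_rpow_ge (r.toReal/p) (by positivity) M hM1)
                (Real.rpow_nonneg (by positivity) _)
          _ = ∑ j ∈ range M, ((j:ℝ)+1)^(r.toReal/p-1) * (Real.sqrt A / 2)^r.toReal := by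
              rw [Finset.mul_sum]
              exact Finset.sum_congr rfl fun j _ => by ring
          _ ≤ ∑ j ∈ range M,
              ((j:ℝ)+1)^(r.toReal/p-1) * rearr (∑ k, a k • XB n k) j ^ r.toReal := by
              refine Finset.sum_le_sum fun j hj => ?_
              refine mul_le_mul_of_nonneg_left ?_ (Real.rpow_nonneg (by positivity) _)
              exact Real.rpow_le_rpow (by positivity)
                (hrge j (Finset.mem_range.1 hj)) hr'.le
      refine le_trans ?_ (ENNReal.rpow_le_rpow htsum_ge (by positivity))
      rw [ENNReal.ofReal_rpow_of_nonneg hW0 (by positivity)]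
      apply ENNReal.ofReal_le_ofReal
      have hWeq : ((Real.sqrt A / 2)^r.toReal
            * ((2:ℝ)^(-(r.toReal/p)) * (M:ℝ)^(r.toReal/p)))^(1/r.toReal)
          = (Real.sqrt A / 2) * ((2:ℝ)^(-(1:ℝ)/p) * (M:ℝ)^(1/p)) := by
        rw [Real.mul_rpow (Real.rpow_nonneg (by positivity) _) (by positivity),
          Real.mul_rpow (Real.rpow_pos_of_pos (by norm_num) _).le
            (Real.rpow_nonneg (by positivity) _)]
        congr 1
        · rw [← Real.rpow_mul (by positivity), mul_one_div, div_self hr'.ne',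
            Real.rpow_one]
        · congr 1
          · rw [← Real.rpow_mul (by norm_num)]
            congr 1
            field_simp
          · rw [← Real.rpow_mul (by positivity)]
            congr 1
            field_simp
      rw [hWeq]
      calc α = (3/32:ℝ)^(1/p) * c1 / 2 := hαdef
        _ ≤ ((2:ℝ)^(-(1:ℝ)/p) * (M:ℝ)^(1/p) * Real.sqrt A)/2 := by linarith [hcore]
        _ = Real.sqrt A / 2 * ((2:ℝ)^(-(1:ℝ)/p) * (M:ℝ)^(1/p)) := by ring
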